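/- The function G_α(s,t) = c_{α,d,κ} (κ‖s−t‖)^{(α−d)/2} K_{(α−d)/2}(κ‖s−t‖), with c_{α,d,κ} = 2^{1−(α−d)/2} / ((4π)^{d/2} Γ(α/2) κ^{α−d}), viewed as a function of t for fixed s, belongs to L_p(ℝ^d) if and only if α > (p−1)d/p, for 1 ≤ p < ∞ and α, κ > 0. -/

import Mathlib

open MeasureTheory Real Set
open scoped ENNReal

noncomputable def besselK (ν x : ℝ) : ℝ :=
  ∫ t in Ioi (0 : ℝ), Real.exp (-x * Real.cosh t) * Real.cosh (ν * t)

/-- The Green's function `G_α` of `(κ² − Δ)^{α/2}` on `ℝ^d`. -/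
noncomputable def greenG (d : ℕ) (α κ : ℝ) (s t : EuclideanSpace ℝ (Fin d)) : ℝ :=
  2 ^ (1 - (α - d) / 2) / ((4 * π) ^ ((d : ℝ) / 2) * Real.Gamma (α / 2) * κ ^ (α - d)) *
    (κ * ‖s - t‖) ^ ((α - d) / 2) * besselK ((α - d) / 2) (κ * ‖s - t‖)

/-! ### Auxiliary development -/

noncomputable def besselKL (ν x : ℝ) : ℝ≥0∞ :=
  ∫⁻ t in Ioi (0 : ℝ), ENNReal.ofReal (Real.exp (-x * Real.cosh t) * Real.cosh (ν * t))

lemma besselK_eq_toReal (ν x : ℝ) : besselK ν x = (besselKL ν x).toReal := by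
  rw [besselK, besselKL, integral_eq_lintegral_of_nonneg_ae]
  · filter_upwards with t
    positivity
  · exact (((continuous_const.mul Real.continuous_cosh).rexp).mul
      (Real.continuous_cosh.comp (continuous_const.mul continuous_id))).aestronglyMeasurable

lemma besselK_nonneg (ν x : ℝ) : 0 ≤ besselK ν x := by
  rw [besselK_eq_toReal]; exact ENNReal.toReal_nonneg

lemma measurable_besselK (ν : ℝ) : Measurable (besselK ν) := by
  have h : besselK ν = fun x => (besselKL ν x).toReal := funext fun x => besselK_eq_toReal ν x
  rw [h]
  apply Measurable.ennreal_toReal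
  apply Measurable.lintegral_prod_right' (f := fun q : ℝ × ℝ =>
    ENNReal.ofReal (Real.exp (-q.1 * Real.cosh q.2) * Real.cosh (ν * q.2)))
  exact ((((continuous_fst.neg.mul (Real.continuous_cosh.comp continuous_snd)).rexp).mul
    (Real.continuous_cosh.comp (continuous_const.mul continuous_snd))).measurable).ennreal_ofReal

lemma besselKL_abs (ν x : ℝ) : besselKL ν x = besselKL |ν| x := by
  unfold besselKL
  apply setLIntegral_congr_fun measurableSet_Ioi
  intro t ht
  have : Real.cosh (ν * t) = Real.cosh (|ν| * t) := by
    rcases abs_choice ν with h | h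
    · rw [h]
    · rw [h, neg_mul, Real.cosh_neg]
  beta_reduce
  rw [this]

lemma besselKL_mono (ν m x : ℝ) (h : |ν| ≤ m) : besselKL ν x ≤ besselKL m x := by
  unfold besselKL
  apply lintegral_mono_ae
  filter_upwards [ae_restrict_mem measurableSet_Ioi] with t ht
  apply ENNReal.ofReal_le_ofReal
  apply mul_le_mul_of_nonneg_left _ (Real.exp_nonneg _)
  rw [Real.cosh_le_cosh]
  calc |ν * t| = |ν| * t := by rw [abs_mul, abs_of_pos (show (0:ℝ) < t from ht)]
  _ ≤ m * t := by nlinarith [le_of_lt (show (0:ℝ) < t from ht)]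
  _ ≤ |m * t| := le_abs_self _

lemma cosh_le_exp' {t : ℝ} (ht : 0 ≤ t) : Real.cosh t ≤ Real.exp t := by
  rw [Real.cosh_eq]
  nlinarith [Real.exp_le_exp.2 (neg_le_self ht), Real.exp_pos t]

lemma half_exp_le_cosh (t : ℝ) : Real.exp t / 2 ≤ Real.cosh t := by
  rw [Real.cosh_eq]
  nlinarith [Real.exp_pos (-t)]

lemma one_add_sq_quarter_le_cosh (t : ℝ) : 1 + t ^ 2 / 4 ≤ Real.cosh t := by
  rw [Real.cosh_eq]
  have h1 := Real.sum_le_exp_of_nonneg (abs_nonneg t) 3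
  have h2 := Real.add_one_le_exp (-|t|)
  have h3 : Real.exp t + Real.exp (-t) = Real.exp |t| + Real.exp (-|t|) := by
    rcases abs_choice t with h | h
    · rw [h]
    · rw [h]; ring_nf
  simp [Finset.sum_range_succ] at h1
  linarith

/-- Integral of the exponential tail. -/
lemma lintegral_exp_tail (T : ℝ) :
    ∫⁻ t in Ioi T, ENNReal.ofReal (Real.exp (T - t)) = 1 := by
  have hint : IntegrableOn (fun t : ℝ => Real.exp (T - t)) (Ioi T) := by
    apply ((exp_neg_integrableOn_Ioi T (b := 1) one_pos).const_mul (Real.exp T)).congr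
    filter_upwards with t
    rw [← Real.exp_add]
    ring_nf
  rw [← ofReal_integral_eq_lintegral_ofReal hint
    (Filter.Eventually.of_forall fun t => Real.exp_nonneg _)]
  have : ∫ t in Ioi T, Real.exp (T - t) = Real.exp T * ∫ t in Ioi T, Real.exp (-t) := by
    rw [← integral_const_mul]
    congr 1 with t
    rw [← Real.exp_add]; ring_nf
  rw [this, integral_exp_neg_Ioi, ← Real.exp_add]
  simp

/-- Integral of `exp (m t)` over `Ioc 0 T`. -/
lemma lintegral_exp_Ioc {m : ℝ} (hm : 0 < m) {T : ℝ} (hT : 0 ≤ T) :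
    ∫⁻ t in Ioc (0:ℝ) T, ENNReal.ofReal (Real.exp (m * t))
      = ENNReal.ofReal ((Real.exp (m * T) - 1) / m) := by
  have hint : IntegrableOn (fun t : ℝ => Real.exp (m * t)) (Ioc (0:ℝ) T) :=
    (Real.continuous_exp.comp (continuous_const.mul continuous_id)).integrableOn_Ioc
  rw [← ofReal_integral_eq_lintegral_ofReal hint
    (Filter.Eventually.of_forall fun t => Real.exp_nonneg _)]
  congr 1
  rw [← intervalIntegral.integral_of_le hT]
  have := intervalIntegral.integral_comp_mul_left (a := (0:ℝ)) (b := T)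
    (fun u => Real.exp u) (c := m) hm.ne'
  rw [this, integral_exp]
  simp [smul_eq_mul, mul_zero, Real.exp_zero, div_eq_inv_mul]

/-- Upper bound for the Bessel integral, sharp enough for small `x`. -/
lemma besselKL_le_small {m x : ℝ} (hm : 0 < m) (hx : 0 < x) :
    besselKL m x ≤ ENNReal.ofReal ((max (2/x) 1) ^ m * (1/m + Real.exp ((m+1)^2))) := by
  set c : ℝ := x / 2 with hc
  have hcpos : 0 < c := by positivity
  set E : ℝ := max (1/c) 1 with hE
  have hE1 : 1 ≤ E := le_max_right _ _
  have hEc : 1 ≤ c * E := by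
    calc (1:ℝ) = c * (1/c) := by field_simp
    _ ≤ c * E := by apply mul_le_mul_of_nonneg_left (le_max_left _ _) hcpos.le
  set T : ℝ := Real.log E with hT
  have hT0 : 0 ≤ T := Real.log_nonneg hE1
  have hexpT : Real.exp T = E := Real.exp_log (by linarith)
  have hE2 : E = max (2/x) 1 := by
    rw [hE, hc]; norm_num
  -- pointwise bound of the integrand
  have hpt : ∀ t : ℝ, 0 < t → Real.exp (-x * Real.cosh t) * Real.cosh (m * t)
      ≤ Real.exp (-(c * Real.exp t) + m * t) := by
    intro t ht
    have h1 : Real.cosh (m * t) ≤ Real.exp (m * t) := cosh_le_exp' (by positivity)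
    have h2 : Real.exp (-x * Real.cosh t) ≤ Real.exp (-(c * Real.exp t)) := by
      apply Real.exp_le_exp.2
      have := half_exp_le_cosh t
      rw [hc]
      nlinarith
    calc Real.exp (-x * Real.cosh t) * Real.cosh (m * t)
        ≤ Real.exp (-(c * Real.exp t)) * Real.exp (m * t) := by
          apply mul_le_mul h2 h1 (Real.cosh_pos _).le (Real.exp_nonneg _)
      _ = Real.exp (-(c * Real.exp t) + m * t) := (Real.exp_add _ _).symm
  have key2 : ∀ t : ℝ, T < t → Real.exp (-(c * Real.exp t) + m * t)
      ≤ E ^ m * Real.exp ((m + 1) ^ 2) * Real.exp (T - t) := by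
    intro t ht
    set u : ℝ := t - T with hu
    have hu0 : 0 < u := by simp [hu]; linarith
    have hce : u ^ 2 / 2 ≤ c * Real.exp t := by
      have h5 : Real.exp u ≤ c * Real.exp t := by
        have h4 : c * Real.exp t = (c * E) * Real.exp u := by
          rw [hu, Real.exp_sub, hexpT]; field_simp
        rw [h4]
        nlinarith [Real.exp_pos u]
      refine le_trans ?_ h5
      have h6 := Real.sum_le_exp_of_nonneg hu0.le 3
      simp [Finset.sum_range_succ] at h6
      nlinarith
    have hquad : -(u ^ 2 / 2) + m * u ≤ (m + 1) ^ 2 - u := by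
      nlinarith [sq_nonneg (u / 2 - (m + 1))]
    have : -(c * Real.exp t) + m * t ≤ m * T + ((m + 1) ^ 2) + (T - t) := by
      have hmt : m * t = m * T + m * u := by rw [hu]; ring
      have h7 : T - t = -u := by rw [hu]; ring
      rw [hmt, h7]
      nlinarith
    calc Real.exp (-(c * Real.exp t) + m * t)
        ≤ Real.exp (m * T + (m + 1) ^ 2 + (T - t)) := Real.exp_le_exp.2 this
      _ = E ^ m * Real.exp ((m + 1) ^ 2) * Real.exp (T - t) := by
          rw [Real.exp_add, Real.exp_add, mul_comm m T, Real.exp_mul, hexpT]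
  have hEm : (0:ℝ) < E ^ m := Real.rpow_pos_of_pos (by linarith) m
  calc besselKL m x
      ≤ ∫⁻ t in Ioi (0:ℝ), ENNReal.ofReal (Real.exp (-(c * Real.exp t) + m * t)) := by
        unfold besselKL
        apply lintegral_mono_ae
        filter_upwards [ae_restrict_mem measurableSet_Ioi] with t ht
        exact ENNReal.ofReal_le_ofReal (hpt t ht)
    _ = (∫⁻ t in Ioc (0:ℝ) T, ENNReal.ofReal (Real.exp (-(c * Real.exp t) + m * t)))
        + ∫⁻ t in Ioi T, ENNReal.ofReal (Real.exp (-(c * Real.exp t) + m * t)) := by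
        rw [← lintegral_union measurableSet_Ioi (Ioc_disjoint_Ioi le_rfl),
          Ioc_union_Ioi_eq_Ioi hT0]
    _ ≤ ENNReal.ofReal (E ^ m / m) + ENNReal.ofReal (E ^ m * Real.exp ((m + 1) ^ 2)) := by
        apply add_le_add
        · calc ∫⁻ t in Ioc (0:ℝ) T, ENNReal.ofReal (Real.exp (-(c * Real.exp t) + m * t))
              ≤ ∫⁻ t in Ioc (0:ℝ) T, ENNReal.ofReal (Real.exp (m * t)) := by
                apply lintegral_mono
                intro t
                apply ENNReal.ofReal_le_ofReal
                apply Real.exp_le_exp.2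
                nlinarith [mul_pos hcpos (Real.exp_pos t)]
            _ = ENNReal.ofReal ((Real.exp (m * T) - 1) / m) := lintegral_exp_Ioc hm hT0
            _ ≤ ENNReal.ofReal (E ^ m / m) := by
                apply ENNReal.ofReal_le_ofReal
                rw [mul_comm m T, Real.exp_mul, hexpT, div_le_div_iff₀ hm hm]
                nlinarith [Real.rpow_pos_of_pos (lt_of_lt_of_le one_pos hE1) m]
        · calc ∫⁻ t in Ioi T, ENNReal.ofReal (Real.exp (-(c * Real.exp t) + m * t))
              ≤ ∫⁻ t in Ioi T, ENNReal.ofReal (E ^ m * Real.exp ((m + 1) ^ 2) * Real.exp (T - t)) := by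
                apply lintegral_mono_ae
                filter_upwards [ae_restrict_mem measurableSet_Ioi] with t ht
                exact ENNReal.ofReal_le_ofReal (key2 t ht)
            _ = ENNReal.ofReal (E ^ m * Real.exp ((m + 1) ^ 2)) := by
                simp_rw [ENNReal.ofReal_mul (by positivity : (0:ℝ) ≤ E ^ m * Real.exp ((m+1)^2))]
                rw [lintegral_const_mul' _ _ ENNReal.ofReal_ne_top, lintegral_exp_tail T, mul_one]
    _ = ENNReal.ofReal ((max (2/x) 1) ^ m * (1/m + Real.exp ((m+1)^2))) := by
        rw [← ENNReal.ofReal_add (by positivity) (by positivity), ← hE2]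
        congr 1
        field_simp

/-- Exponential-decay upper bound for the Bessel integral, for `x ≥ κ`. -/
lemma besselKL_le_large {m x κ : ℝ} (hm : 0 ≤ m) (hκ : 0 < κ) (hx : κ ≤ x) :
    besselKL m x ≤ ENNReal.ofReal (Real.exp ((m+1)^2/κ) * Real.exp (-x/2)) := by
  have hx0 : 0 < x := lt_of_lt_of_le hκ hx
  have hpt : ∀ t : ℝ, 0 < t → Real.exp (-x * Real.cosh t) * Real.cosh (m * t)
      ≤ Real.exp ((m+1)^2/κ) * Real.exp (-x/2) * Real.exp (0 - t) := by
    intro t ht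
    have h1 : Real.cosh (m * t) ≤ Real.exp (m * t) := cosh_le_exp' (by positivity)
    have h2 := one_add_sq_quarter_le_cosh t
    have hq : (m + 1) * t ≤ κ * t ^ 2 / 4 + (m + 1) ^ 2 / κ := by
      have hu : (m + 1) ^ 2 / κ * κ = (m + 1) ^ 2 := div_mul_cancel₀ _ hκ.ne'
      nlinarith [sq_nonneg (κ * t - 2 * (m + 1)), mul_pos hκ hκ]
    have h3 : -x * Real.cosh t + m * t ≤ (m+1)^2/κ + (-x/2) + (0 - t) := by
      nlinarith [mul_le_mul_of_nonneg_left h2 hx0.le, sq_nonneg t]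
    calc Real.exp (-x * Real.cosh t) * Real.cosh (m * t)
        ≤ Real.exp (-x * Real.cosh t) * Real.exp (m * t) :=
          mul_le_mul_of_nonneg_left h1 (Real.exp_nonneg _)
      _ = Real.exp (-x * Real.cosh t + m * t) := (Real.exp_add _ _).symm
      _ ≤ Real.exp ((m+1)^2/κ + (-x/2) + (0 - t)) := Real.exp_le_exp.2 h3
      _ = _ := by rw [Real.exp_add, Real.exp_add]
  calc besselKL m x
      ≤ ∫⁻ t in Ioi (0:ℝ),
          ENNReal.ofReal (Real.exp ((m+1)^2/κ) * Real.exp (-x/2) * Real.exp (0 - t)) := by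
        unfold besselKL
        apply lintegral_mono_ae
        filter_upwards [ae_restrict_mem measurableSet_Ioi] with t ht
        exact ENNReal.ofReal_le_ofReal (hpt t ht)
    _ = ENNReal.ofReal (Real.exp ((m+1)^2/κ) * Real.exp (-x/2)) := by
        simp_rw [ENNReal.ofReal_mul (by positivity : (0:ℝ) ≤ Real.exp ((m+1)^2/κ) * Real.exp (-x/2))]
        rw [lintegral_const_mul' _ _ ENNReal.ofReal_ne_top, lintegral_exp_tail 0, mul_one]

/-- Lower bound for the Bessel integral for small `x`. -/
lemma besselKL_ge {m x : ℝ} (hm : 0 < m) (hx : 0 < x) (hx' : x ≤ Real.exp (-(1 + 1/m))) :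
    ENNReal.ofReal (x ^ (-m) / (4 * Real.exp 1 * m)) ≤ besselKL m x := by
  set T : ℝ := -Real.log x with hT
  have hT1 : 1 + 1/m ≤ T := by
    rw [hT, le_neg]
    calc Real.log x ≤ Real.log (Real.exp (-(1 + 1/m))) := Real.log_le_log hx hx'
      _ = -(1 + 1/m) := Real.log_exp _
  have hT0 : 0 ≤ T := by
    have : (0:ℝ) < 1 + 1/m := by positivity
    linarith
  have hexpT : Real.exp T = x⁻¹ := by rw [hT, Real.exp_neg, Real.exp_log hx]
  have hxm : Real.exp (m * T) = x ^ (-m) := by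
    rw [Real.rpow_def_of_pos hx, hT]
    ring_nf
  have hxm2 : (2:ℝ) ≤ x ^ (-m) := by
    rw [← hxm]
    have hmm : m * (1 + 1/m) = m + 1 := by field_simp
    have : (1:ℝ) + 1 ≤ m * T + 1 := by
      have h1T : 1 ≤ m * T := by
        calc (1:ℝ) ≤ m + 1 := by linarith
          _ = m * (1 + 1/m) := hmm.symm
          _ ≤ m * T := mul_le_mul_of_nonneg_left hT1 hm.le
      linarith
    calc (2:ℝ) = 1 + 1 := by norm_num
      _ ≤ m * T + 1 := this
      _ ≤ Real.exp (m * T) := by linarith [Real.add_one_le_exp (m * T)]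
  have hpt : ∀ t : ℝ, t ∈ Ioc (0:ℝ) T →
      Real.exp (-1) / 2 * Real.exp (m * t) ≤ Real.exp (-x * Real.cosh t) * Real.cosh (m * t) := by
    intro t ht
    have h1 : Real.exp (m * t) / 2 ≤ Real.cosh (m * t) := half_exp_le_cosh _
    have h2 : Real.exp (-1) ≤ Real.exp (-x * Real.cosh t) := by
      apply Real.exp_le_exp.2
      have h3 : Real.cosh t ≤ x⁻¹ := by
        calc Real.cosh t ≤ Real.exp t := cosh_le_exp' ht.1.le
          _ ≤ Real.exp T := Real.exp_le_exp.2 ht.2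
          _ = x⁻¹ := hexpT
      have h4 : x * Real.cosh t ≤ 1 := by
        calc x * Real.cosh t ≤ x * x⁻¹ := mul_le_mul_of_nonneg_left h3 hx.le
          _ = 1 := mul_inv_cancel₀ hx.ne'
      linarith
    calc Real.exp (-1) / 2 * Real.exp (m * t)
        = Real.exp (-1) * (Real.exp (m * t) / 2) := by ring
      _ ≤ Real.exp (-x * Real.cosh t) * Real.cosh (m * t) := by
          apply mul_le_mul h2 h1 (by positivity) (Real.exp_nonneg _)
  calc ENNReal.ofReal (x ^ (-m) / (4 * Real.exp 1 * m))
      ≤ ENNReal.ofReal (Real.exp (-1) / 2 * ((Real.exp (m * T) - 1) / m)) := by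
        apply ENNReal.ofReal_le_ofReal
        rw [hxm, Real.exp_neg]
        have e1 : (0:ℝ) < Real.exp 1 := Real.exp_pos 1
        have h5 : x ^ (-m) / 2 ≤ x ^ (-m) - 1 := by linarith
        calc x ^ (-m) / (4 * Real.exp 1 * m)
            = (Real.exp 1)⁻¹ / 2 * (x ^ (-m) / 2 / m) := by ring
          _ ≤ (Real.exp 1)⁻¹ / 2 * ((x ^ (-m) - 1) / m) := by
              apply mul_le_mul_of_nonneg_left _ (by positivity)
              rw [div_le_div_iff₀ hm hm]
              nlinarith
      _ = ∫⁻ t in Ioc (0:ℝ) T, ENNReal.ofReal (Real.exp (-1) / 2 * Real.exp (m * t)) := by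
        simp_rw [ENNReal.ofReal_mul (by positivity : (0:ℝ) ≤ Real.exp (-1) / 2)]
        rw [lintegral_const_mul' _ _ ENNReal.ofReal_ne_top, lintegral_exp_Ioc hm hT0]
      _ ≤ ∫⁻ t in Ioc (0:ℝ) T, ENNReal.ofReal (Real.exp (-x * Real.cosh t) * Real.cosh (m * t)) := by
        apply lintegral_mono_ae
        filter_upwards [ae_restrict_mem measurableSet_Ioc] with t ht
        exact ENNReal.ofReal_le_ofReal (hpt t ht)
      _ ≤ besselKL m x := by
        unfold besselKL
        exact lintegral_mono' (Measure.restrict_mono Ioc_subset_Ioi_self le_rfl) le_rfl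

lemma besselK_le_of_besselKL {ν x B : ℝ} (hB : 0 ≤ B) (h : besselKL ν x ≤ ENNReal.ofReal B) :
    besselK ν x ≤ B := by
  rw [besselK_eq_toReal]
  exact ENNReal.toReal_le_of_le_ofReal hB h

lemma besselK_ge {m x : ℝ} (hm : 0 < m) (hx : 0 < x) (hx' : x ≤ Real.exp (-(1 + 1/m))) :
    x ^ (-m) / (4 * Real.exp 1 * m) ≤ besselK m x := by
  have hfin : besselKL m x ≠ ⊤ :=
    ne_top_of_le_ne_top ENNReal.ofReal_ne_top (besselKL_le_small hm hx)
  rw [besselK_eq_toReal, ← ENNReal.ofReal_le_iff_le_toReal hfin]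
  exact besselKL_ge hm hx hx'

/-- Convergence of scaled Gamma-type integrals. -/
lemma gammaTail {a c : ℝ} (ha : 0 < a) (hc : 0 < c) :
    ∫⁻ y in Ioi (0:ℝ), ENNReal.ofReal (y ^ (a-1) * Real.exp (-(c*y))) < ⊤ := by
  have h0 := Real.GammaIntegral_convergent ha
  have h2 : IntegrableOn (fun y : ℝ => Real.exp (-(c*y)) * (c*y) ^ (a-1)) (Ioi 0) := by
    have := (integrableOn_Ioi_comp_mul_left_iff
      (fun u : ℝ => Real.exp (-u) * u ^ (a-1)) 0 hc).2 (by rwa [mul_zero])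
    exact this
  have h3 : IntegrableOn (fun y : ℝ => y ^ (a-1) * Real.exp (-(c*y))) (Ioi 0) := by
    apply (h2.const_mul (c ^ (a-1))⁻¹).congr
    filter_upwards [ae_restrict_mem measurableSet_Ioi] with y hy
    rw [Real.mul_rpow hc.le (le_of_lt hy)]
    have : c ^ (a-1) ≠ 0 := (Real.rpow_pos_of_pos hc _).ne'
    field_simp
  exact h3.lintegral_lt_top

/-- Divergence of the power integral near zero for exponents `≤ -1`. -/
lemma lintegral_rpow_Ioc_eq_top {y₀ r : ℝ} (hy₀ : 0 < y₀) (hr : r ≤ -1) :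
    ∫⁻ y in Ioc (0:ℝ) y₀, ENNReal.ofReal (y ^ r) = ⊤ := by
  by_contra h
  have hfin : ∫⁻ y in Ioo (0:ℝ) y₀, ENNReal.ofReal (y ^ r) < ⊤ :=
    lt_of_le_of_lt (lintegral_mono' (Measure.restrict_mono Ioo_subset_Ioc_self le_rfl) le_rfl)
      (lt_top_iff_ne_top.2 h)
  have hint : IntegrableOn (fun y : ℝ => y ^ r) (Ioo 0 y₀) := by
    constructor
    · exact (continuousOn_id.rpow_const fun x hx => Or.inl (ne_of_gt hx.1)).aestronglyMeasurable
        measurableSet_Ioo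
    · rw [hasFiniteIntegral_iff_norm]
      calc ∫⁻ y in Ioo (0:ℝ) y₀, ENNReal.ofReal ‖(y:ℝ) ^ r‖
          = ∫⁻ y in Ioo (0:ℝ) y₀, ENNReal.ofReal (y ^ r) := by
            apply lintegral_congr_ae
            filter_upwards [ae_restrict_mem measurableSet_Ioo] with y hy
            rw [Real.norm_eq_abs, abs_of_nonneg (Real.rpow_nonneg hy.1.le r)]
        _ < ⊤ := hfin
  rw [intervalIntegral.integrableOn_Ioo_rpow_iff hy₀] at hint
  linarith

/-- Polar-coordinates formula for the Lebesgue integral of a radial function. -/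
lemma lintegral_fun_norm_addHaar_aux {E : Type*} [NormedAddCommGroup E] [NormedSpace ℝ E]
    [MeasurableSpace E] [BorelSpace E] [FiniteDimensional ℝ E] [Nontrivial E]
    (μ : Measure E) [μ.IsAddHaarMeasure] (f : ℝ → ℝ≥0∞) (hf : Measurable f) :
    ∫⁻ x, f ‖x‖ ∂μ = (Module.finrank ℝ E) * μ (Metric.ball 0 1) *
      ∫⁻ y in Ioi (0:ℝ), ENNReal.ofReal (y ^ (Module.finrank ℝ E - 1)) * f y := by
  have hmeas : Measurable fun p : Metric.sphere (0:E) 1 × Ioi (0:ℝ) => f p.2 :=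
    hf.comp (measurable_subtype_coe.comp measurable_snd)
  have h1 : ∫⁻ x, f ‖x‖ ∂μ = ∫⁻ x : ({0}ᶜ : Set E), f ‖(x : E)‖ ∂(Measure.comap Subtype.val μ) := by
    rw [lintegral_subtype_comap (measurableSet_singleton (0:E)).compl
      (fun x : E => f ‖x‖), restrict_compl_singleton]
  have h2 : ∫⁻ x : ({0}ᶜ : Set E), f ‖(x : E)‖ ∂(Measure.comap Subtype.val μ) =
      ∫⁻ p : Metric.sphere (0:E) 1 × Ioi (0:ℝ), f p.2
        ∂(μ.toSphere.prod (Measure.volumeIoiPow (Module.finrank ℝ E - 1))) := by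
    rw [← (μ.measurePreserving_homeomorphUnitSphereProd).lintegral_comp hmeas]
    apply lintegral_congr
    intro x
    simp
  have h3 : ∫⁻ p : Metric.sphere (0:E) 1 × Ioi (0:ℝ), f p.2
        ∂(μ.toSphere.prod (Measure.volumeIoiPow (Module.finrank ℝ E - 1)))
      = μ.toSphere univ * ∫⁻ y : Ioi (0:ℝ), f y
          ∂(Measure.volumeIoiPow (Module.finrank ℝ E - 1)) := by
    rw [lintegral_prod _ hmeas.aemeasurable]
    simp [lintegral_const, mul_comm]
  have h4 : ∫⁻ y : Ioi (0:ℝ), f y ∂(Measure.volumeIoiPow (Module.finrank ℝ E - 1))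
      = ∫⁻ y in Ioi (0:ℝ), ENNReal.ofReal (y ^ (Module.finrank ℝ E - 1)) * f y := by
    rw [Measure.volumeIoiPow, lintegral_withDensity_eq_lintegral_mul _
      ((measurable_subtype_coe.pow_const _).ennreal_ofReal)
      (g := fun y : Ioi (0:ℝ) => f ↑y) (hf.comp measurable_subtype_coe)]
    simp only [Pi.mul_apply]
    exact lintegral_subtype_comap (measurableSet_Ioi : MeasurableSet (Ioi (0:ℝ)))
      (fun y => ENNReal.ofReal (y ^ (Module.finrank ℝ E - 1)) * f y)
  rw [h1, h2, h3, h4, Measure.toSphere_apply_univ]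

set_option maxHeartbeats 1000000 in
/-- `G_α(s, ·) ∈ L_p(ℝ^d)` if and only if `α > (p−1)d/p`. -/
theorem greenG_memLp_iff (d : ℕ) (hd : 0 < d) (α κ p : ℝ) (hα : 0 < α) (hκ : 0 < κ)
    (hp : 1 ≤ p) (s : EuclideanSpace ℝ (Fin d)) :
    MemLp (fun t => greenG d α κ s t) (ENNReal.ofReal p) volume ↔
      (p - 1) * d / p < α := by
  classical
  have hp0 : (0:ℝ) < p := lt_of_lt_of_le one_pos hp
  have hd0 : (0:ℝ) < d := by exact_mod_cast hd
  have hd1 : 1 ≤ d := hd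
  set ν : ℝ := (α - d) / 2 with hν
  set A : ℝ := 2 ^ (1 - (α - (d:ℝ)) / 2) /
    ((4 * π) ^ ((d : ℝ) / 2) * Real.Gamma (α / 2) * κ ^ (α - (d:ℝ))) with hA
  have hApos : 0 < A := by
    apply div_pos (Real.rpow_pos_of_pos two_pos _)
    have h4π : (0:ℝ) < 4 * π := by positivity
    exact mul_pos (mul_pos (Real.rpow_pos_of_pos h4π _)
      (Real.Gamma_pos_of_pos (by positivity))) (Real.rpow_pos_of_pos hκ _)
  set ψ : ℝ → ℝ := fun y => A * Real.exp (Real.log (κ * y) * ν) * besselK ν (κ * y) with hψ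
  have hψ_meas : Measurable ψ := by
    apply Measurable.mul
    · exact measurable_const.mul
        (Real.measurable_exp.comp ((Real.measurable_log.comp
          (measurable_id.const_mul κ)).mul_const ν))
    · exact (measurable_besselK ν).comp (measurable_id.const_mul κ)
  have hψ_nonneg : ∀ y, 0 ≤ ψ y := fun y =>
    mul_nonneg (mul_nonneg hApos.le (Real.exp_nonneg _)) (besselK_nonneg _ _)
  have hψφ : ∀ y : ℝ, 0 < y → ψ y = A * (κ * y) ^ ν * besselK ν (κ * y) := by
    intro y hy
    rw [hψ]
    rw [Real.rpow_def_of_pos (by positivity)]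
  have hGt : ∀ t, t ≠ s → greenG d α κ s t = ψ ‖s - t‖ := by
    intro t ht
    have hst : (0:ℝ) < ‖s - t‖ := by
      rw [norm_pos_iff, sub_ne_zero]
      exact Ne.symm ht
    rw [greenG, hψφ _ hst]
  haveI : Nontrivial (EuclideanSpace ℝ (Fin d)) := by
    apply Module.nontrivial_of_finrank_pos (R := ℝ)
    rw [finrank_euclideanSpace_fin]
    exact hd
  have hae : ∀ᵐ t : EuclideanSpace ℝ (Fin d) ∂volume, t ≠ s := by
    rw [ae_iff]
    have : {t : EuclideanSpace ℝ (Fin d) | ¬ t ≠ s} = {s} := by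
      ext t; simp
    rw [this]
    exact measure_singleton s
  have hG_meas : AEStronglyMeasurable (fun t => greenG d α κ s t) volume := by
    apply AEStronglyMeasurable.congr
      ((hψ_meas.comp ((continuous_const.sub continuous_id).norm.measurable)).aestronglyMeasurable)
    filter_upwards [hae] with t ht
    exact (hGt t ht).symm
  set f : ℝ → ℝ≥0∞ := fun y => ENNReal.ofReal (ψ y ^ p) with hfdef
  have hf_meas : Measurable f := by
    have h : f = fun y => (ENNReal.ofReal (ψ y)) ^ p := by
      funext y
      rw [ENNReal.ofReal_rpow_of_nonneg (hψ_nonneg y) hp0.le]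
    rw [h]
    exact ENNReal.continuous_rpow_const.measurable.comp hψ_meas.ennreal_ofReal
  have hq0 : (ENNReal.ofReal p) ≠ 0 := by
    simp only [ne_eq, ENNReal.ofReal_eq_zero, not_le]
    exact hp0
  have hqt : (ENNReal.ofReal p) ≠ ⊤ := ENNReal.ofReal_ne_top
  have htoReal : (ENNReal.ofReal p).toReal = p := ENNReal.toReal_ofReal hp0.le
  have hmem : MemLp (fun t => greenG d α κ s t) (ENNReal.ofReal p) volume ↔
      (∫⁻ t, ‖greenG d α κ s t‖ₑ ^ p ∂volume) < ⊤ := by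
    constructor
    · intro h
      have h2 := h.2
      rw [eLpNorm_eq_lintegral_rpow_enorm_toReal hq0 hqt, htoReal] at h2
      by_contra hcon
      rw [not_lt, top_le_iff] at hcon
      rw [hcon, ENNReal.top_rpow_of_pos (by positivity)] at h2
      exact (lt_irrefl _ h2).elim
    · intro h
      refine ⟨hG_meas, ?_⟩
      rw [eLpNorm_eq_lintegral_rpow_enorm_toReal hq0 hqt, htoReal]
      exact ENNReal.rpow_lt_top_of_nonneg (by positivity) h.ne
  have hstep : (∫⁻ t, ‖greenG d α κ s t‖ₑ ^ p ∂volume)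
      = ∫⁻ u : EuclideanSpace ℝ (Fin d), f ‖u‖ ∂volume := by
    have h1 : (∫⁻ t, ‖greenG d α κ s t‖ₑ ^ p ∂volume)
        = ∫⁻ t, f ‖s - t‖ ∂volume := by
      apply lintegral_congr_ae
      filter_upwards [hae] with t ht
      rw [hGt t ht, hfdef]
      rw [Real.enorm_eq_ofReal (hψ_nonneg _),
        ENNReal.ofReal_rpow_of_nonneg (hψ_nonneg _) hp0.le]
    have hmp : MeasurePreserving (fun t : EuclideanSpace ℝ (Fin d) => s + -t) volume volume :=
      (measurePreserving_add_left volume s).comp (Measure.measurePreserving_neg volume)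
    have h2 : ∫⁻ t, f ‖s + -t‖ ∂volume
        = ∫⁻ u : EuclideanSpace ℝ (Fin d), f ‖u‖ ∂volume :=
      hmp.lintegral_comp (hf_meas.comp measurable_norm)
    simp_rw [sub_eq_add_neg] at h1
    rw [h1, ← h2]
  have hfr := lintegral_fun_norm_addHaar_aux (volume : Measure (EuclideanSpace ℝ (Fin d)))
    f hf_meas
  rw [finrank_euclideanSpace_fin] at hfr
  set c₀ : ℝ≥0∞ := (d : ℝ≥0∞) * volume (Metric.ball (0 : EuclideanSpace ℝ (Fin d)) 1) with hc₀
  have hc₀0 : c₀ ≠ 0 := by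
    apply mul_ne_zero
    · exact_mod_cast Nat.pos_iff_ne_zero.1 hd
    · exact (Metric.measure_ball_pos volume _ one_pos).ne'
  have hc₀t : c₀ ≠ ⊤ := by
    apply ENNReal.mul_ne_top (by simp)
    exact measure_ball_lt_top.ne
  set J : ℝ≥0∞ := ∫⁻ y in Ioi (0:ℝ), ENNReal.ofReal (y ^ ((d:ℝ)-1) * ψ y ^ p) with hJ
  have hint_eq : (∫⁻ y in Ioi (0:ℝ), ENNReal.ofReal (y ^ (d - 1)) * f y) = J := by
    rw [hJ]
    apply setLIntegral_congr_fun measurableSet_Ioi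
    intro y
    intro hy
    have hy0 : (0:ℝ) < y := hy
    rw [hfdef]; beta_reduce; rw [← ENNReal.ofReal_mul (by positivity), ← Real.rpow_natCast y (d-1),
      Nat.cast_sub hd1, Nat.cast_one]
  have hmain : (∫⁻ t, ‖greenG d α κ s t‖ₑ ^ p ∂volume) < ⊤ ↔ J < ⊤ := by
    rw [hstep, hfr, hint_eq]
    constructor
    · intro h
      by_contra hcon
      rw [not_lt, top_le_iff] at hcon
      rw [hcon, ENNReal.mul_top hc₀0] at h
      exact (lt_irrefl _ h).elim
    · intro h
      exact ENNReal.mul_lt_top hc₀t.lt_top h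
  rw [hmem, hmain]
  have hId : (p - 1) * (d:ℝ) / p = d - d / p := by field_simp
  constructor
  · -- necessity, by contradiction
    intro hJlt
    by_contra hcon
    push_neg at hcon
    set m : ℝ := ((d:ℝ) - α) / 2 with hm
    have hdp : 0 < (d:ℝ)/p := by positivity
    have hαd : α ≤ (d:ℝ) - d / p := by rwa [hId] at hcon
    have hm0 : 0 < m := by rw [hm]; linarith
    have hνm : ν = -m := by rw [hν, hm]; ring
    set y₀ : ℝ := Real.exp (-(1 + 1/m)) / κ with hy₀
    have hy₀0 : 0 < y₀ := by positivity
    set c₇ : ℝ := A * (κ ^ ν * κ ^ (-m)) / (4 * Real.exp 1 * m) with hc₇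
    have hκν : (0:ℝ) < κ ^ ν := Real.rpow_pos_of_pos hκ _
    have hκm : (0:ℝ) < κ ^ (-m) := Real.rpow_pos_of_pos hκ _
    have hc₇0 : 0 < c₇ := by
      apply div_pos (mul_pos hApos (mul_pos hκν hκm))
      positivity
    set q : ℝ := (d:ℝ) + (α - d) * p with hq
    have hq0' : q ≤ 0 := by
      have h2 : α - (d:ℝ) ≤ -((d:ℝ)/p) := by linarith
      have h1 : (α - (d:ℝ)) * p ≤ -(d:ℝ) := by
        calc (α - (d:ℝ)) * p ≤ (-((d:ℝ)/p)) * p := mul_le_mul_of_nonneg_right h2 hp0.le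
          _ = -(d:ℝ) := by field_simp
      rw [hq]; linarith
    have hlow : ∀ y : ℝ, y ∈ Ioc (0:ℝ) y₀ →
        c₇ ^ p * y ^ (q - 1) ≤ y ^ ((d:ℝ)-1) * ψ y ^ p := by
      intro y hy
      obtain ⟨hy0, hyle⟩ := hy
      have hx0 : 0 < κ * y := by positivity
      have hxle : κ * y ≤ Real.exp (-(1 + 1/m)) := by
        rw [hy₀] at hyle
        calc κ * y ≤ κ * (Real.exp (-(1 + 1/m)) / κ) := by
              exact mul_le_mul_of_nonneg_left hyle hκ.le
          _ = Real.exp (-(1 + 1/m)) := by field_simp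
      have hKge : (κ * y) ^ (-m) / (4 * Real.exp 1 * m) ≤ besselK ν (κ * y) := by
        have heq : besselK ν (κ * y) = besselK m (κ * y) := by
          rw [besselK_eq_toReal, besselK_eq_toReal, besselKL_abs ν, besselKL_abs m,
            abs_of_nonpos (show ν ≤ 0 by rw [hνm]; linarith), abs_of_pos hm0, hνm, neg_neg]
        rw [heq]
        exact besselK_ge hm0 hx0 hxle
      have e1 : ((κ*y):ℝ) ^ ν = κ ^ ν * y ^ ν := Real.mul_rpow hκ.le hy0.le
      have e2 : ((κ*y):ℝ) ^ (-m) = κ ^ (-m) * y ^ (-m) := Real.mul_rpow hκ.le hy0.le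
      have e3 : y ^ (α - (d:ℝ)) = y ^ ν * y ^ (-m) := by
        rw [← Real.rpow_add hy0]
        congr 1
        rw [hν, hm]; ring
      have hψge : c₇ * y ^ (α - (d:ℝ)) ≤ ψ y := by
        rw [hψφ y hy0]
        calc c₇ * y ^ (α - (d:ℝ))
            = A * (κ ^ ν * y ^ ν) * ((κ ^ (-m) * y ^ (-m)) / (4 * Real.exp 1 * m)) := by
              rw [e3, hc₇]; ring
          _ = A * ((κ*y) ^ ν) * ((κ*y) ^ (-m) / (4 * Real.exp 1 * m)) := by rw [e1, e2]
          _ ≤ A * ((κ*y) ^ ν) * besselK ν (κ*y) := by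
              apply mul_le_mul_of_nonneg_left hKge
              positivity
      have hψp : (c₇ * y ^ (α - (d:ℝ))) ^ p ≤ ψ y ^ p :=
        Real.rpow_le_rpow (by positivity) hψge hp0.le
      have hexpand : (c₇ * y ^ (α - (d:ℝ))) ^ p = c₇ ^ p * y ^ ((α - (d:ℝ)) * p) := by
        rw [Real.mul_rpow hc₇0.le (Real.rpow_nonneg hy0.le _), ← Real.rpow_mul hy0.le]
      calc c₇ ^ p * y ^ (q-1)
          = y ^ ((d:ℝ)-1) * (c₇ ^ p * y ^ ((α - (d:ℝ)) * p)) := by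
            rw [show q - 1 = ((d:ℝ)-1) + (α - (d:ℝ))*p by rw [hq]; ring, Real.rpow_add hy0]
            ring
        _ ≤ y ^ ((d:ℝ)-1) * ψ y ^ p := by
            apply mul_le_mul_of_nonneg_left _ (Real.rpow_nonneg hy0.le _)
            rw [← hexpand]; exact hψp
    have hJtop : (⊤:ℝ≥0∞) ≤ J := by
      have hc₇p : (0:ℝ) < c₇ ^ p := Real.rpow_pos_of_pos hc₇0 p
      calc (⊤:ℝ≥0∞) = ENNReal.ofReal (c₇ ^ p) *
            ∫⁻ y in Ioc (0:ℝ) y₀, ENNReal.ofReal (y ^ (q-1)) := by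
            rw [lintegral_rpow_Ioc_eq_top hy₀0 (by linarith : q - 1 ≤ -1),
              ENNReal.mul_top (ENNReal.ofReal_pos.2 hc₇p).ne']
        _ = ∫⁻ y in Ioc (0:ℝ) y₀, ENNReal.ofReal (c₇ ^ p * y ^ (q-1)) := by
            rw [← lintegral_const_mul' _ _ ENNReal.ofReal_ne_top]
            apply setLIntegral_congr_fun measurableSet_Ioc
            intro y
            intro hy
            beta_reduce
            rw [ENNReal.ofReal_mul hc₇p.le]
        _ ≤ ∫⁻ y in Ioc (0:ℝ) y₀, ENNReal.ofReal (y ^ ((d:ℝ)-1) * ψ y ^ p) := by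
            apply lintegral_mono_ae
            filter_upwards [ae_restrict_mem measurableSet_Ioc] with y hy
            exact ENNReal.ofReal_le_ofReal (hlow y hy)
        _ ≤ J := by
            rw [hJ]
            exact lintegral_mono' (Measure.restrict_mono Ioc_subset_Ioi_self le_rfl) le_rfl
    exact absurd (lt_of_le_of_lt hJtop hJlt) (lt_irrefl ⊤)
  · -- sufficiency
    intro hlt
    set μ₀ : ℝ := max ν ((d:ℝ)/(2*p)) with hμ₀
    have hμpos : 0 < μ₀ :=
      lt_of_lt_of_le (by positivity : (0:ℝ) < (d:ℝ)/(2*p)) (le_max_right _ _)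
    have hαd : (d:ℝ) - d/p < α := by rwa [hId] at hlt
    have hstrict : -ν < (d:ℝ)/(2*p) := by
      rw [hν]
      have h2 : (d:ℝ) - α < d/p := by linarith
      have h3 : -((α - (d:ℝ))/2) = ((d:ℝ) - α)/2 := by ring
      rw [h3]
      calc ((d:ℝ) - α)/2 < (d:ℝ)/p/2 := by linarith
        _ = (d:ℝ)/(2*p) := by ring
    have hνμ : |ν| ≤ μ₀ := by
      rw [abs_le]
      constructor
      · have := le_max_right ν ((d:ℝ)/(2*p))
        linarith
      · exact le_max_left _ _
    have hνμ' : ν ≤ μ₀ := le_max_left _ _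
    set β : ℝ := μ₀ - ν with hβ
    have hβ0 : 0 ≤ β := by rw [hβ]; linarith
    have hβd : β * p < d := by
      rcases max_choice ν ((d:ℝ)/(2*p)) with h | h
      · rw [hβ, hμ₀, h]
        simpa using hd0
      · rw [hβ, hμ₀, h]
        have hh : ((d:ℝ)/(2*p) - ν) * p = (d:ℝ)/2 - ν * p := by field_simp
        rw [hh]
        have h4 : -ν * p < (d:ℝ)/2 := by
          calc -ν * p < ((d:ℝ)/(2*p)) * p := mul_lt_mul_of_pos_right hstrict hp0
            _ = (d:ℝ)/2 := by field_simp
        linarith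
    have ha1 : 0 < (d:ℝ) - β*p := by linarith
    set C₃' : ℝ := 1/μ₀ + Real.exp ((μ₀+1)^2) with hC₃
    have hC₃0 : 0 < C₃' := by positivity
    set D : ℝ := (2/κ) * max 1 (κ/2) with hD
    have hD1 : (1:ℝ) ≤ D := by
      rw [hD]
      calc (1:ℝ) = (2/κ) * (κ/2) := by field_simp
        _ ≤ (2/κ) * max 1 (κ/2) :=
            mul_le_mul_of_nonneg_left (le_max_right _ _) (by positivity)
    have hD0 : (0:ℝ) < D := lt_of_lt_of_le one_pos hD1
    set C₄ : ℝ := A * κ ^ ν * C₃' * D ^ μ₀ with hC₄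
    have hκν : (0:ℝ) < κ ^ ν := Real.rpow_pos_of_pos hκ _
    have hDμ : (0:ℝ) < D ^ μ₀ := Real.rpow_pos_of_pos hD0 _
    have hC₄0 : 0 < C₄ := by rw [hC₄]; positivity
    have hb1 : ∀ y : ℝ, y ∈ Ioc (0:ℝ) 1 →
        y ^ ((d:ℝ)-1) * ψ y ^ p ≤ (C₄ ^ p * Real.exp 1) *
          (y ^ (((d:ℝ) - β*p) - 1) * Real.exp (-(1*y))) := by
      intro y hy
      obtain ⟨hy0, hy1⟩ := hy
      have hx0 : 0 < κ * y := by positivity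
      have hKb : besselK ν (κ*y) ≤ (max (2/(κ*y)) 1) ^ μ₀ * C₃' := by
        apply besselK_le_of_besselKL (by positivity)
        calc besselKL ν (κ*y) ≤ besselKL μ₀ (κ*y) := besselKL_mono _ _ _ hνμ
          _ ≤ ENNReal.ofReal ((max (2/(κ*y)) 1) ^ μ₀ * C₃') := by
              rw [hC₃]
              exact besselKL_le_small hμpos hx0
      have hmax : max (2/(κ*y)) 1 ≤ D / y := by
        apply max_le
        · have h27 : 2/κ ≤ D := by
            rw [hD]
            nlinarith [le_max_left (1:ℝ) (κ/2), div_pos two_pos hκ]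
          rw [← div_div]
          exact (div_le_div_iff_of_pos_right hy0).2 h27
        · rw [le_div_iff₀ hy0, one_mul]
          exact hy1.trans hD1
      have hKb2 : besselK ν (κ*y) ≤ (D ^ μ₀ * y ^ (-μ₀)) * C₃' := by
        refine hKb.trans (mul_le_mul_of_nonneg_right ?_ hC₃0.le)
        calc (max (2/(κ*y)) 1) ^ μ₀ ≤ (D/y) ^ μ₀ :=
              Real.rpow_le_rpow (by positivity) hmax hμpos.le
          _ = D ^ μ₀ * y ^ (-μ₀) := by
              rw [Real.div_rpow hD0.le hy0.le, Real.rpow_neg hy0.le, div_eq_mul_inv]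
      have hψb : ψ y ≤ C₄ * y ^ (-β) := by
        rw [hψφ y hy0]
        calc A * (κ*y) ^ ν * besselK ν (κ*y)
            ≤ A * (κ*y) ^ ν * ((D ^ μ₀ * y ^ (-μ₀)) * C₃') := by
              apply mul_le_mul_of_nonneg_left hKb2
              positivity
          _ = C₄ * (y ^ ν * y ^ (-μ₀)) := by
              rw [Real.mul_rpow hκ.le hy0.le, hC₄]; ring
          _ = C₄ * y ^ (-β) := by
              rw [← Real.rpow_add hy0]
              congr 1
              rw [hβ]; ring
      have hψbp : ψ y ^ p ≤ C₄ ^ p * y ^ (-β * p) := by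
        calc ψ y ^ p ≤ (C₄ * y ^ (-β)) ^ p := Real.rpow_le_rpow (hψ_nonneg y) hψb hp0.le
          _ = C₄ ^ p * y ^ (-β * p) := by
              rw [Real.mul_rpow hC₄0.le (Real.rpow_nonneg hy0.le _), ← Real.rpow_mul hy0.le]
      have hexp1 : (1:ℝ) ≤ Real.exp 1 * Real.exp (-(1*y)) := by
        rw [← Real.exp_add]
        calc (1:ℝ) = Real.exp 0 := Real.exp_zero.symm
          _ ≤ _ := Real.exp_le_exp.2 (by linarith)
      calc y ^ ((d:ℝ)-1) * ψ y ^ p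
          ≤ y ^ ((d:ℝ)-1) * (C₄ ^ p * y ^ (-β * p)) :=
            mul_le_mul_of_nonneg_left hψbp (Real.rpow_nonneg hy0.le _)
        _ = C₄ ^ p * y ^ (((d:ℝ) - β*p) - 1) := by
            rw [show ((d:ℝ) - β*p) - 1 = ((d:ℝ)-1) + (-β * p) by ring, Real.rpow_add hy0]
            ring
        _ ≤ (C₄ ^ p * Real.exp 1) * (y ^ (((d:ℝ) - β*p) - 1) * Real.exp (-(1*y))) := by
            have h0 : 0 ≤ C₄ ^ p * y ^ (((d:ℝ) - β*p) - 1) := by positivity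
            nlinarith [mul_le_mul_of_nonneg_left hexp1 h0]
    set E₅ : ℝ := Real.exp ((μ₀+1)^2/κ) with hE₅
    set C₆ : ℝ := A * κ ^ ν * E₅ with hC₆
    have hC₆0 : 0 < C₆ := by rw [hC₆]; positivity
    have ha2 : 0 < (d:ℝ) + μ₀*p := by positivity
    have hc2 : 0 < p * κ / 2 := by positivity
    have hb2 : ∀ y : ℝ, y ∈ Ioi (1:ℝ) →
        y ^ ((d:ℝ)-1) * ψ y ^ p ≤ C₆ ^ p *
          (y ^ (((d:ℝ) + μ₀*p) - 1) * Real.exp (-(p * κ / 2 * y))) := by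
      intro y hy
      have hy1 : 1 < y := hy
      have hy0 : 0 < y := lt_trans one_pos hy1
      have hx : κ ≤ κ * y := by nlinarith
      have hKb : besselK ν (κ*y) ≤ E₅ * Real.exp (-(κ*y)/2) := by
        apply besselK_le_of_besselKL (by positivity)
        calc besselKL ν (κ*y) ≤ besselKL μ₀ (κ*y) := besselKL_mono _ _ _ hνμ
          _ ≤ ENNReal.ofReal (E₅ * Real.exp (-(κ*y)/2)) := by
              rw [hE₅]
              exact besselKL_le_large hμpos.le hκ hx
      have hyν : (κ*y) ^ ν ≤ κ ^ ν * y ^ μ₀ := by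
        rw [Real.mul_rpow hκ.le hy0.le]
        exact mul_le_mul_of_nonneg_left
          (Real.rpow_le_rpow_of_exponent_le hy1.le hνμ') (Real.rpow_nonneg hκ.le _)
      have hψb : ψ y ≤ C₆ * (y ^ μ₀ * Real.exp (-(κ*y)/2)) := by
        rw [hψφ y hy0]
        calc A * (κ*y) ^ ν * besselK ν (κ*y)
            ≤ A * (κ ^ ν * y ^ μ₀) * (E₅ * Real.exp (-(κ*y)/2)) := by
              apply mul_le_mul (mul_le_mul_of_nonneg_left hyν hApos.le) hKb
                (besselK_nonneg _ _) (by positivity)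
          _ = C₆ * (y ^ μ₀ * Real.exp (-(κ*y)/2)) := by rw [hC₆]; ring
      have hψbp : ψ y ^ p ≤ C₆ ^ p * (y ^ (μ₀ * p) * Real.exp ((-(κ*y)/2) * p)) := by
        calc ψ y ^ p ≤ (C₆ * (y ^ μ₀ * Real.exp (-(κ*y)/2))) ^ p :=
              Real.rpow_le_rpow (hψ_nonneg y) hψb hp0.le
          _ = C₆ ^ p * (y ^ (μ₀ * p) * Real.exp ((-(κ*y)/2) * p)) := by
              rw [Real.mul_rpow hC₆0.le (by positivity),
                Real.mul_rpow (Real.rpow_nonneg hy0.le _) (Real.exp_nonneg _),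
                ← Real.rpow_mul hy0.le, ← Real.exp_mul]
      calc y ^ ((d:ℝ)-1) * ψ y ^ p
          ≤ y ^ ((d:ℝ)-1) * (C₆ ^ p * (y ^ (μ₀*p) * Real.exp ((-(κ*y)/2) * p))) :=
            mul_le_mul_of_nonneg_left hψbp (Real.rpow_nonneg hy0.le _)
        _ = C₆ ^ p * (y ^ (((d:ℝ) + μ₀*p) - 1) * Real.exp (-(p * κ / 2 * y))) := by
            rw [show ((d:ℝ) + μ₀*p) - 1 = ((d:ℝ)-1) + μ₀*p by ring, Real.rpow_add hy0,
              show (-(κ*y)/2) * p = -(p * κ / 2 * y) by ring]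
            ring
    rw [hJ, ← Ioc_union_Ioi_eq_Ioi (zero_le_one' ℝ),
      lintegral_union measurableSet_Ioi (Ioc_disjoint_Ioi le_rfl)]
    apply ENNReal.add_lt_top.2
    constructor
    · calc ∫⁻ y in Ioc (0:ℝ) 1, ENNReal.ofReal (y ^ ((d:ℝ)-1) * ψ y ^ p)
          ≤ ∫⁻ y in Ioc (0:ℝ) 1, ENNReal.ofReal ((C₄ ^ p * Real.exp 1) *
              (y ^ (((d:ℝ) - β*p) - 1) * Real.exp (-(1*y)))) := by
            apply lintegral_mono_ae
            filter_upwards [ae_restrict_mem measurableSet_Ioc] with y hy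
            exact ENNReal.ofReal_le_ofReal (hb1 y hy)
        _ ≤ ∫⁻ y in Ioi (0:ℝ), ENNReal.ofReal ((C₄ ^ p * Real.exp 1) *
              (y ^ (((d:ℝ) - β*p) - 1) * Real.exp (-(1*y)))) :=
            lintegral_mono' (Measure.restrict_mono Ioc_subset_Ioi_self le_rfl) le_rfl
        _ = ENNReal.ofReal (C₄ ^ p * Real.exp 1) *
            ∫⁻ y in Ioi (0:ℝ), ENNReal.ofReal (y ^ (((d:ℝ) - β*p) - 1) * Real.exp (-(1*y))) := by
            simp_rw [ENNReal.ofReal_mul (by positivity : (0:ℝ) ≤ C₄ ^ p * Real.exp 1)]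
            rw [lintegral_const_mul' _ _ ENNReal.ofReal_ne_top]
        _ < ⊤ := ENNReal.mul_lt_top ENNReal.ofReal_lt_top (gammaTail ha1 one_pos)
    · calc ∫⁻ y in Ioi (1:ℝ), ENNReal.ofReal (y ^ ((d:ℝ)-1) * ψ y ^ p)
          ≤ ∫⁻ y in Ioi (1:ℝ), ENNReal.ofReal (C₆ ^ p *
              (y ^ (((d:ℝ) + μ₀*p) - 1) * Real.exp (-(p * κ / 2 * y)))) := by
            apply lintegral_mono_ae
            filter_upwards [ae_restrict_mem measurableSet_Ioi] with y hy
            exact ENNReal.ofReal_le_ofReal (hb2 y hy)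
        _ ≤ ∫⁻ y in Ioi (0:ℝ), ENNReal.ofReal (C₆ ^ p *
              (y ^ (((d:ℝ) + μ₀*p) - 1) * Real.exp (-(p * κ / 2 * y)))) :=
            lintegral_mono' (Measure.restrict_mono (Ioi_subset_Ioi zero_le_one) le_rfl) le_rfl
        _ = ENNReal.ofReal (C₆ ^ p) *
            ∫⁻ y in Ioi (0:ℝ), ENNReal.ofReal (y ^ (((d:ℝ) + μ₀*p) - 1) *
              Real.exp (-(p * κ / 2 * y))) := by
            simp_rw [ENNReal.ofReal_mul (by positivity : (0:ℝ) ≤ C₆ ^ p)]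
            rw [lintegral_const_mul' _ _ ENNReal.ofReal_ne_top]
        _ < ⊤ := ENNReal.mul_lt_top ENNReal.ofReal_lt_top (gammaTail ha2 hc2)
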